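/- Let G be a finite group that is the product G = M H of a normal subgroup M and a cyclic subgroup H with gcd(|M|, |H|) = 1. Then G can be covered by at most f(|M|) cyclic subgroups, where f depends only on |M|. -/

import Mathlib

open Subgroup Pointwise
section Helpers
variable {G : Type*} [Group G]
variable {G : Type*} [Group G]

/-- conjugated subgroup -/
abbrev conjS (g : G) (K : Subgroup G) : Subgroup G := K.map (MulAut.conj g).toMonoidHom

lemma conjS_conjS (a b : G) (K : Subgroup G) : conjS a (conjS b K) = conjS (a*b) K := by
  rw [conjS, conjS, Subgroup.map_map]
  congr 1
  ext x
  simp [MulAut.conj_apply, mul_assoc]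

lemma conjS_zpowers (g x : G) : conjS g (zpowers x) = zpowers (g * x * g⁻¹) := by
  rw [conjS, MonoidHom.map_zpowers]; rfl

lemma card_conjS (g : G) (K : Subgroup G) : Nat.card (conjS g K) = Nat.card K := by
  exact Nat.card_congr ((equivMapOfInjective K _ (MulAut.conj g).injective).toEquiv).symm

lemma mem_conjS {g x : G} {K : Subgroup G} : x ∈ conjS g K ↔ g⁻¹ * x * g ∈ K := by
  simp only [conjS, Subgroup.mem_map, MulAut.conj_apply, MulEquiv.coe_toMonoidHom]
  constructor
  · rintro ⟨y, hy, rfl⟩; group; simpa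
  · intro h; exact ⟨_, h, by group⟩

lemma conjS_smul (g : G) (K : Subgroup G) : MulAut.conj g • K = conjS g K := rfl

lemma conjS_sup (g : G) (A B : Subgroup G) : conjS g (A ⊔ B) = conjS g A ⊔ conjS g B :=
  Subgroup.map_sup _ _ _

/-- the product set of a normalized pair of subgroups is the sup -/
lemma coe_sup_of_norm {A B : Subgroup G} (h : ∀ b ∈ B, ∀ a ∈ A, b * a * b⁻¹ ∈ A) :
    ((A ⊔ B : Subgroup G) : Set G) = (A : Set G) * (B : Set G) := by
  have hsub : ∃ S : Subgroup G, (S : Set G) = (A : Set G) * B ∧ S = A ⊔ B := by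
    refine ⟨{ carrier := (A : Set G) * B
              one_mem' := ⟨1, one_mem _, 1, one_mem _, one_mul 1⟩
              mul_mem' := ?_
              inv_mem' := ?_ }, rfl, ?_⟩
    · rintro x y ⟨a, ha, b, hb, rfl⟩ ⟨a', ha', b', hb', rfl⟩
      exact ⟨a * (b * a' * b⁻¹), mul_mem ha (h b hb a' ha'), b * b',
        mul_mem hb hb', by group⟩
    · rintro x ⟨a, ha, b, hb, rfl⟩
      refine ⟨b⁻¹ * a⁻¹ * b, by simpa using h _ (inv_mem hb) _ (inv_mem ha), b⁻¹, inv_mem hb, by group⟩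
    · apply le_antisymm
      · rintro x ⟨a, ha, b, hb, rfl⟩
        exact mul_mem (mem_sup_left ha) (mem_sup_right hb)
      · refine sup_le (fun a ha => ⟨a, ha, 1, one_mem _, (mul_one a)⟩)
          (fun b hb => ⟨1, one_mem _, b, hb, (one_mul b)⟩)
  obtain ⟨S, h1, h2⟩ := hsub
  rw [← h2, h1]

lemma card_sup_of_norm_disjoint {A B : Subgroup G}
    (h : ∀ b ∈ B, ∀ a ∈ A, b * a * b⁻¹ ∈ A) (hd : A ⊓ B = ⊥) :
    Nat.card (A ⊔ B : Subgroup G) = Nat.card A * Nat.card B := by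
  rw [← Nat.card_prod]
  apply (Nat.card_congr _).symm
  refine Equiv.ofBijective (fun p => ⟨(p.1 : G) * p.2,
    mul_mem (mem_sup_left p.1.2) (mem_sup_right p.2.2)⟩) ⟨?_, ?_⟩
  · rintro ⟨⟨a, ha⟩, ⟨b, hb⟩⟩ ⟨⟨a', ha'⟩, ⟨b', hb'⟩⟩ heq
    have heq' : a * b = a' * b' := congrArg Subtype.val heq
    have hab : a'⁻¹ * a = b' * b⁻¹ := by
      have : a'⁻¹ * (a * b) * b⁻¹ = a'⁻¹ * (a' * b') * b⁻¹ := by rw [heq']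
      calc a'⁻¹ * a = a'⁻¹ * (a * b) * b⁻¹ := by group
        _ = a'⁻¹ * (a' * b') * b⁻¹ := this
        _ = b' * b⁻¹ := by group
    have key : a'⁻¹ * a ∈ A ⊓ B := by
      rw [Subgroup.mem_inf]
      exact ⟨mul_mem (inv_mem ha') ha, hab ▸ mul_mem hb' (inv_mem hb)⟩
    rw [hd, Subgroup.mem_bot] at key
    have ha2 : a = a' := by
      have h3 : a' * (a'⁻¹ * a) = a' * 1 := by rw [key]
      group at h3
      exact h3
    have hb2 : b = b' := by
      have h2 : b' * b⁻¹ = 1 := by rw [← hab, key]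
      have h3 : (b' * b⁻¹) * b = 1 * b := by rw [h2]
      group at h3
      exact h3.symm
    simp only [Prod.mk.injEq, Subtype.mk_eq_mk]
    exact ⟨ha2, hb2⟩
  · rintro ⟨x, hx⟩
    have : x ∈ (A : Set G) * B := by rw [← coe_sup_of_norm h]; exact hx
    obtain ⟨a, ha, b, hb, rfl⟩ := this
    exact ⟨⟨⟨a, ha⟩, ⟨b, hb⟩⟩, rfl⟩
/-- conjugate of a complement of a normal subgroup is a complement -/
lemma isComplement'_conjS [Finite G] {D K : Subgroup G} (hD : D.Normal)
    (h : IsComplement' D K) (g : G) : IsComplement' D (conjS g K) := by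
  apply isComplement'_of_card_mul_and_disjoint
  · rw [card_conjS]; exact h.card_mul
  · rw [disjoint_iff_inf_le]
    rintro x ⟨hx1, hx2⟩
    rw [Subgroup.mem_bot]
    obtain hk := mem_conjS.mp hx2
    have hDmem : g⁻¹ * x * g ∈ D := by simpa [mul_assoc] using hD.conj_mem x hx1 g⁻¹
    have h1 : g⁻¹ * x * g = 1 := by
      have hd := h.disjoint
      rw [disjoint_iff_inf_le] at hd
      exact Subgroup.mem_bot.mp (hd ⟨hDmem, hk⟩)
    have : x = g * (g⁻¹ * x * g) * g⁻¹ := by group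
    rw [this, h1]; group

/-- restriction of a complement to an intermediate subgroup containing K -/
lemma isComplement'_subgroupOf {D K C : Subgroup G} (h : IsComplement' D K)
    (hKC : K ≤ C) : IsComplement' (D.subgroupOf C) (K.subgroupOf C) := by
  constructor
  · rintro ⟨⟨⟨d, hdC⟩, hd⟩, ⟨⟨k, hkC⟩, hk⟩⟩ ⟨⟨⟨d', hdC'⟩, hd'⟩, ⟨⟨k', hkC'⟩, hk'⟩⟩ heq
    have hG : d * k = d' * k' := by
      have := congrArg (fun z : C => (z : G)) heq
      simpa using this
    have hDK := h.1 (a₁ := (⟨⟨d, hd⟩, ⟨k, hk⟩⟩ : ↥(D : Set G) × ↥(K : Set G)))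
      (a₂ := (⟨⟨d', hd'⟩, ⟨k', hk'⟩⟩ : ↥(D : Set G) × ↥(K : Set G))) (by simpa using hG)
    have hd2 : d = d' := congrArg (fun z => (z.1 : G)) hDK
    have hk2 : k = k' := congrArg (fun z => (z.2 : G)) hDK
    subst hd2; subst hk2
    rfl
  · rintro c
    obtain ⟨⟨⟨d, hd⟩, ⟨k, hk⟩⟩, hdk⟩ := h.2 (c : G)
    simp only at hdk
    have hkC : k ∈ C := hKC hk
    have hdC : d ∈ C := by
      have : d = (c : G) * k⁻¹ := by rw [← hdk]; group
      rw [this]; exact mul_mem c.2 (inv_mem hkC)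
    refine ⟨⟨⟨⟨d, hdC⟩, hd⟩, ⟨⟨k, hkC⟩, hk⟩⟩, ?_⟩
    exact Subtype.ext hdk

lemma map_subtype_conjS (C : Subgroup G) (c : C) (X : Subgroup C) :
    Subgroup.map C.subtype (conjS c X) = conjS (c : G) (Subgroup.map C.subtype X) := by
  rw [conjS, conjS, Subgroup.map_map, Subgroup.map_map]
  have : C.subtype.comp (MulAut.conj c).toMonoidHom
      = ((MulAut.conj (c : G)).toMonoidHom).comp C.subtype := by
    apply MonoidHom.ext; intro y; rfl
  rw [this]

lemma card_lt_of_ne_top [Finite G] {C : Subgroup G} (h : C ≠ ⊤) :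
    Nat.card C < Nat.card G := by
  have h1 : Nat.card C * C.index = Nat.card G := C.card_mul_index
  have h2 : C.index ≠ 1 := fun hh => h (Subgroup.index_eq_one.mp hh)
  have h3 : C.index ≠ 0 := Subgroup.index_ne_zero_of_finite
  have h4 : 0 < Nat.card C := Nat.card_pos
  have h5 : 2 ≤ C.index := by omega
  nlinarith

lemma subgroup_eq_of_le_of_card_le [Finite G] {A B : Subgroup G} (h : A ≤ B)
    (hc : Nat.card B ≤ Nat.card A) : A = B := by
  have := Set.eq_of_subset_of_ncard_le (Set.le_iff_subset.mp h)
    (by rwa [← Nat.card_coe_set_eq, ← Nat.card_coe_set_eq]) (B : Set G).toFinite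
  exact SetLike.coe_injective this

lemma zpowers_eq_sup {x : G} {s t : ℕ} (hco : Nat.Coprime s t) :
    zpowers x = zpowers (x ^ s) ⊔ zpowers (x ^ t) := by
  apply le_antisymm
  · rw [zpowers_le]
    obtain ⟨a, b, hab⟩ := hco.isCoprime
    have h1 : (x ^ (s : ℤ)) ^ a ∈ zpowers (x ^ s) := by
      rw [zpow_natCast]; exact zpow_mem (mem_zpowers _) a
    have h2 : (x ^ (t : ℤ)) ^ b ∈ zpowers (x ^ t) := by
      rw [zpow_natCast]; exact zpow_mem (mem_zpowers _) b
    have hmem : (x ^ (s:ℤ)) ^ a * (x ^ (t:ℤ)) ^ b ∈ zpowers (x ^ s) ⊔ zpowers (x ^ t) :=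
      mul_mem (mem_sup_left h1) (mem_sup_right h2)
    have hx : (x ^ (s:ℤ)) ^ a * (x ^ (t:ℤ)) ^ b = x := by
      rw [← zpow_mul, ← zpow_mul, ← zpow_add,
        show (s:ℤ) * a + (t:ℤ) * b = 1 by rw [mul_comm ((s:ℤ)) a, mul_comm ((t:ℤ)) b]; exact hab,
        zpow_one]
    rwa [hx] at hmem
  · apply sup_le <;> rw [zpowers_le] <;> exact pow_mem (mem_zpowers x) _

/-- extract a generator of a cyclic subgroup -/
lemma exists_zpowers_eq {K : Subgroup G} (h : IsCyclic K) :
    ∃ k : G, k ∈ K ∧ zpowers k = K ∧ orderOf k = Nat.card K := by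
  obtain ⟨g₀, hg₀⟩ := h.exists_generator
  refine ⟨(g₀ : G), g₀.2, ?_, ?_⟩
  · apply le_antisymm
    · rw [zpowers_le]; exact g₀.2
    · intro y hy
      obtain ⟨i, hi⟩ := hg₀ ⟨y, hy⟩
      exact ⟨i, by simpa using congrArg Subtype.val hi⟩
  · have h1 : zpowers g₀ = (⊤ : Subgroup K) := (zpowers g₀).eq_top_iff'.mpr hg₀
    calc orderOf (g₀ : G) = orderOf g₀ := orderOf_submonoid g₀
      _ = Nat.card (zpowers g₀) := (Nat.card_zpowers g₀).symm
      _ = Nat.card K := by rw [h1, card_top]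

lemma isCyclic_of_zpowers_eq {S : Subgroup G} {g : G} (h : zpowers g = S) : IsCyclic S := by
  subst h
  exact ⟨⟨⟨g, mem_zpowers g⟩, fun ⟨y, hy⟩ => by
    obtain ⟨i, hi⟩ := hy
    exact ⟨i, Subtype.ext (by simpa using hi)⟩⟩⟩

lemma commute_of_mem_zpowers {g x y : G} (hx : x ∈ zpowers g) (hy : y ∈ zpowers g) :
    Commute x y := by
  obtain ⟨i, rfl⟩ := hx
  obtain ⟨j, rfl⟩ := hy
  exact (Commute.refl g).zpow_zpow i j

lemma conjS_eq_of_normal {D : Subgroup G} (hD : D.Normal) (g : G) : conjS g D = D := by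
  ext x
  rw [mem_conjS]
  constructor
  · intro h; simpa [mul_assoc] using hD.conj_mem _ h g
  · intro h; simpa [mul_assoc] using hD.conj_mem _ h g⁻¹

end Helpers
section ConjA

/-- Conjugacy of cyclic complements to a normal Hall subgroup. -/
lemma conjA : ∀ (bnd : ℕ) (N : Type) [Group N] [Finite N] (D K K' : Subgroup N),
    Nat.card N ≤ bnd → D.Normal → IsCyclic K → IsCyclic K' →
    Nat.Coprime (Nat.card D) (Nat.card K) → D.IsComplement' K → D.IsComplement' K' →
    ∃ g : N, conjS g K' = K := by
  intro bnd
  induction bnd with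
  | zero =>
    intro N _ _ D K K' hle _ _ _ _ _ _
    have : 0 < Nat.card N := Nat.card_pos
    omega
  | succ n IH =>
    intro N _ _ D K K' hle hD hKc hK'c hcop h1 h2
    -- cardinalities
    have hcardN : Nat.card D * Nat.card K = Nat.card N := h1.card_mul
    have hcardN' : Nat.card D * Nat.card K' = Nat.card N := h2.card_mul
    have hDpos : 0 < Nat.card D := Nat.card_pos
    have hKK' : Nat.card K' = Nat.card K :=
      Nat.eq_of_mul_eq_mul_left hDpos (hcardN'.trans hcardN.symm)
    set e := Nat.card K with he
    by_cases he1 : e = 1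
    · -- trivial complements
      have hKbot : K = ⊥ := Subgroup.card_eq_one.mp (he ▸ he1)
      have hK'bot : K' = ⊥ := Subgroup.card_eq_one.mp (hKK'.trans he1)
      refine ⟨1, ?_⟩
      rw [hKbot, hK'bot]
      ext x; rw [mem_conjS]; simp
    -- main case
    have hepos : 0 < e := Nat.card_pos
    set p := e.minFac with hpdef
    have hp : p.Prime := Nat.minFac_prime he1
    haveI : Fact p.Prime := ⟨hp⟩
    have hpe : p ∣ e := Nat.minFac_dvd e
    obtain ⟨k, hkK, hkZ, hko0⟩ := exists_zpowers_eq hKc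
    obtain ⟨k', hk'K, hk'Z, hk'o0⟩ := exists_zpowers_eq hK'c
    have hko : orderOf k = e := hko0.trans he.symm
    have hk'o : orderOf k' = e := hk'o0.trans hKK'
    set ep := p ^ e.factorization p with hepdef
    set m := e / ep with hmdef
    have hepm : ep * m = e := Nat.ordProj_mul_ordCompl_eq_self e p
    have hcop_em : Nat.Coprime ep m :=
      Nat.Coprime.pow_left _ (Nat.coprime_ordCompl hp hepos.ne')
    have hep_dvd : ep ∣ e := Nat.ordProj_dvd e p
    have hm_dvd : m ∣ e := Nat.div_dvd_of_dvd hep_dvd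
    have heppos : 0 < ep := pow_pos hp.pos _
    have hmpos : 0 < m := Nat.div_pos (Nat.le_of_dvd hepos hep_dvd) heppos
    have hep1 : 1 < ep := by
      have hfac : 1 ≤ e.factorization p := (Nat.Prime.dvd_iff_one_le_factorization hp hepos.ne').mp hpe
      calc 1 < p := hp.one_lt
        _ = p ^ 1 := (pow_one p).symm
        _ ≤ ep := Nat.pow_le_pow_right hp.pos hfac
    have hmlt : m < e := by
      rw [hmdef]
      exact Nat.div_lt_self hepos hep1
    -- orders of the parts
    have hgm : Nat.gcd e m = m := Nat.gcd_eq_right hm_dvd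
    have hgep : Nat.gcd e ep = ep := Nat.gcd_eq_right hep_dvd
    have hkm_o : orderOf (k ^ m) = ep := by
      rw [orderOf_pow, hko, hgm]
      exact Nat.div_eq_of_eq_mul_left hmpos hepm.symm
    have hkep_o : orderOf (k ^ ep) = m := by
      rw [orderOf_pow, hko, hgep]
    have hk'm_o : orderOf (k' ^ m) = ep := by
      rw [orderOf_pow, hk'o, hgm]
      exact Nat.div_eq_of_eq_mul_left hmpos hepm.symm
    -- p-part of N
    have hpD : ¬ p ∣ Nat.card D := by
      intro hcon
      have h01 : p ∣ Nat.gcd (Nat.card D) e := Nat.dvd_gcd hcon hpe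
      rw [Nat.Coprime] at hcop
      rw [hcop] at h01
      exact hp.one_lt.ne' (Nat.dvd_one.mp h01)
    have hfactN : (Nat.card N).factorization p = e.factorization p := by
      rw [← hcardN, Nat.factorization_mul hDpos.ne' hepos.ne']
      simp [Nat.factorization_eq_zero_of_not_dvd hpD]
    have hcardKp : Nat.card (Subgroup.zpowers (k ^ m)) = p ^ (Nat.card N).factorization p := by
      rw [Nat.card_zpowers, hkm_o, hfactN]
    have hcardK'p : Nat.card (Subgroup.zpowers (k' ^ m)) = p ^ (Nat.card N).factorization p := by
      rw [Nat.card_zpowers, hk'm_o, hfactN]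
    -- Sylow conjugation of the p-parts
    obtain ⟨n₀, hn₀⟩ := MulAction.exists_smul_eq N (Sylow.ofCard _ hcardK'p) (Sylow.ofCard _ hcardKp)
    have hconjP : conjS n₀ (Subgroup.zpowers (k' ^ m)) = Subgroup.zpowers (k ^ m) := by
      have hcoe := congrArg (fun q : Sylow p N => (q : Subgroup N)) hn₀
      simp only [Sylow.coe_subgroup_smul, conjS_smul, Sylow.coe_ofCard] at hcoe
      exact hcoe
    set k'' := n₀ * k' * n₀⁻¹ with hk''def
    have hK''Z : conjS n₀ K' = Subgroup.zpowers k'' := by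
      rw [← hk'Z, conjS_zpowers]
    have hk''o : orderOf k'' = e := by
      have : k'' = (MulAut.conj n₀).toMonoidHom k' := rfl
      rw [this, orderOf_injective _ (MulAut.conj n₀).injective]
      exact hk'o
    have hk''m : k'' ^ m = n₀ * (k' ^ m) * n₀⁻¹ := by
      simp only [hk''def, conj_pow]
    have hk''p : Subgroup.zpowers (k'' ^ m) = Subgroup.zpowers (k ^ m) := by
      rw [hk''m, ← conjS_zpowers, hconjP]
    haveI hcyc'' : IsCyclic (Subgroup.zpowers k'') := isCyclic_of_zpowers_eq rfl
    have hcomp'' : D.IsComplement' (Subgroup.zpowers k'') := by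
      rw [← hK''Z]; exact isComplement'_conjS hD h2 n₀
    -- centralizer of the common p-part
    set C := Subgroup.centralizer {(k ^ m : N)} with hCdef
    have hKC : K ≤ C := by
      intro x hx
      rw [hCdef, Subgroup.mem_centralizer_iff]
      rintro y (rfl : y = k ^ m)
      exact (commute_of_mem_zpowers (pow_mem (mem_zpowers k) m) (hkZ ▸ hx)).eq
    have hK''C : Subgroup.zpowers k'' ≤ C := by
      intro x hx
      rw [hCdef, Subgroup.mem_centralizer_iff]
      rintro y (rfl : y = k ^ m)
      have hkm_mem : k ^ m ∈ Subgroup.zpowers k'' := by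
        have : k ^ m ∈ Subgroup.zpowers (k'' ^ m) := hk''p ▸ mem_zpowers (k'' ^ m) |> fun _ => by
          rw [hk''p]; exact mem_zpowers _
        exact (Subgroup.zpowers_le.mpr (pow_mem (mem_zpowers k'') m)) this
      exact (commute_of_mem_zpowers hkm_mem hx).eq
    by_cases hC : C = ⊤
    · -- the p-part k^m is central in N
      have hcent : ∀ x : N, Commute (k ^ m) x := by
        intro x
        have hx : x ∈ C := hC ▸ Subgroup.mem_top x
        exact Subgroup.mem_centralizer_iff.mp hx (k ^ m) rfl
      set Z := Subgroup.zpowers (k ^ ep) with hZdef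
      have hcardZ : Nat.card Z = m := by rw [hZdef, Nat.card_zpowers, hkep_o]
      have hcopDm : Nat.Coprime (Nat.card D) m := hcop.coprime_dvd_right hm_dvd
      have hDZ : D ⊓ Z = ⊥ := inf_eq_bot_of_coprime (by rw [hcardZ]; exact hcopDm)
      have hnormZ : ∀ b ∈ Z, ∀ a ∈ D, b * a * b⁻¹ ∈ D := fun b _ a ha => hD.conj_mem a ha b
      set P₂ := D ⊔ Z with hP2def
      have hP2card : Nat.card P₂ = Nat.card D * m := by
        rw [hP2def, card_sup_of_norm_disjoint hnormZ hDZ, hcardZ]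
      have hP2lt : Nat.card P₂ < Nat.card N := by
        rw [hP2card, ← hcardN]
        exact mul_lt_mul_of_pos_left hmlt hDpos
      have hP2map : ∀ g : N, conjS g P₂ ≤ P₂ := by
        intro g
        obtain ⟨⟨⟨d, hd⟩, ⟨kg, hkg⟩⟩, hg⟩ := h1.2 g
        simp only at hg
        have hgdk : g = d * kg := hg.symm
        have hZfix : ∀ u : N, u ∈ K → conjS u Z = Z := by
          intro u hu
          rw [hZdef, conjS_zpowers]
          have hcomm : Commute u (k ^ ep) :=
            commute_of_mem_zpowers (hkZ ▸ hu) (pow_mem (mem_zpowers k) ep)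
          congr 1
          rw [hcomm.eq]; group
        have hstep1 : conjS kg P₂ = P₂ := by
          rw [hP2def, conjS, Subgroup.map_sup]
          rw [show Subgroup.map (MulAut.conj kg).toMonoidHom D = conjS kg D from rfl,
            conjS_eq_of_normal hD]
          rw [show Subgroup.map (MulAut.conj kg).toMonoidHom Z = conjS kg Z from rfl,
            hZfix kg hkg]
        have hstep2 : conjS d P₂ ≤ P₂ := by
          rw [hP2def, conjS, Subgroup.map_sup]
          apply sup_le
          · rw [show Subgroup.map (MulAut.conj d).toMonoidHom D = conjS d D from rfl,
              conjS_eq_of_normal hD]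
            exact le_sup_left
          · rw [show Subgroup.map (MulAut.conj d).toMonoidHom Z = conjS d Z from rfl,
              hZdef, conjS_zpowers]
            rw [Subgroup.zpowers_le]
            have hDel : d * (k ^ ep) * d⁻¹ * (k ^ ep)⁻¹ ∈ D := by
              have h2 := hD.conj_mem d⁻¹ (inv_mem hd) (k ^ ep)
              have h3 := mul_mem hd h2
              simpa [mul_assoc] using h3
            have hsplit : d * (k ^ ep) * d⁻¹ = (d * (k ^ ep) * d⁻¹ * (k ^ ep)⁻¹) * (k ^ ep) := by
              group
            rw [hsplit]
            exact mul_mem (mem_sup_left hDel) (mem_sup_right (mem_zpowers _))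
        calc conjS g P₂ = conjS d (conjS kg P₂) := by rw [conjS_conjS, ← hgdk]
          _ = conjS d P₂ := by rw [hstep1]
          _ ≤ P₂ := hstep2
      have hP2norm : P₂.Normal := by
        constructor
        intro x hx g
        refine hP2map g (mem_conjS.mpr ?_)
        have hgg : g⁻¹ * (g * x * g⁻¹) * g = x := by group
        rw [hgg]
        exact hx
      haveI := hP2norm
      have hP2index : P₂.index = ep := by
        have hmi := P₂.card_mul_index
        rw [hP2card, ← hcardN, ← hepm] at hmi
        have hDm : 0 < Nat.card D * m := by positivity
        apply Nat.eq_of_mul_eq_mul_left hDm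
        rw [hmi]; ring
      have hord'' : orderOf (k'' ^ ep) = m := by rw [orderOf_pow, hk''o, hgep]
      have hK''ep : (k'' ^ ep) ∈ P₂ := by
        have h4 : orderOf ((QuotientGroup.mk' P₂) (k'' ^ ep)) ∣ m :=
          hord'' ▸ orderOf_map_dvd (QuotientGroup.mk' P₂) (k'' ^ ep)
        have h5 : orderOf ((QuotientGroup.mk' P₂) (k'' ^ ep)) ∣ ep := by
          have h6 := orderOf_dvd_natCard ((QuotientGroup.mk' P₂) (k'' ^ ep))
          rwa [show Nat.card (N ⧸ P₂) = P₂.index from rfl, hP2index] at h6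
        have h7 : orderOf ((QuotientGroup.mk' P₂) (k'' ^ ep)) = 1 := by
          have hco : Nat.Coprime m ep := hcop_em.symm
          rw [Nat.Coprime] at hco
          exact Nat.dvd_one.mp (hco ▸ Nat.dvd_gcd h4 h5)
        rw [orderOf_eq_one_iff] at h7
        exact (QuotientGroup.eq_one_iff _).mp h7
      have hZ''le : Subgroup.zpowers (k'' ^ ep) ≤ P₂ := Subgroup.zpowers_le.mpr hK''ep
      have hDleP2 : D ≤ P₂ := le_sup_left
      have hZleP2 : Z ≤ P₂ := le_sup_right
      have hcardDD : Nat.card (D.subgroupOf P₂) = Nat.card D :=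
        Nat.card_congr (subgroupOfEquivOfLe hDleP2).toEquiv
      have hcardZ1 : Nat.card (Z.subgroupOf P₂) = m := by
        rw [Nat.card_congr (subgroupOfEquivOfLe hZleP2).toEquiv]; exact hcardZ
      have hcardZ2 : Nat.card ((Subgroup.zpowers (k'' ^ ep)).subgroupOf P₂) = m := by
        rw [Nat.card_congr (subgroupOfEquivOfLe hZ''le).toEquiv, Nat.card_zpowers, hord'']
      have hc1 : (D.subgroupOf P₂).IsComplement' (Z.subgroupOf P₂) :=
        Subgroup.isComplement'_of_coprime (by rw [hcardDD, hcardZ1, hP2card])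
          (by rw [hcardDD, hcardZ1]; exact hcopDm)
      have hc2 : (D.subgroupOf P₂).IsComplement' ((Subgroup.zpowers (k'' ^ ep)).subgroupOf P₂) :=
        Subgroup.isComplement'_of_coprime (by rw [hcardDD, hcardZ2, hP2card])
          (by rw [hcardDD, hcardZ2]; exact hcopDm)
      haveI hZcyc : IsCyclic Z := isCyclic_of_zpowers_eq rfl
      haveI hZ''cyc : IsCyclic (Subgroup.zpowers (k'' ^ ep)) := isCyclic_of_zpowers_eq rfl
      have hcyc1 : IsCyclic (Z.subgroupOf P₂) :=
        isCyclic_of_surjective (subgroupOfEquivOfLe hZleP2).symm.toMonoidHom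
          (subgroupOfEquivOfLe hZleP2).symm.surjective
      have hcyc2 : IsCyclic ((Subgroup.zpowers (k'' ^ ep)).subgroupOf P₂) :=
        isCyclic_of_surjective (subgroupOfEquivOfLe hZ''le).symm.toMonoidHom
          (subgroupOfEquivOfLe hZ''le).symm.surjective
      have hcardP2n : Nat.card P₂ ≤ n := by omega
      have hcop3 : Nat.Coprime (Nat.card (D.subgroupOf P₂)) (Nat.card (Z.subgroupOf P₂)) := by
        rw [hcardDD, hcardZ1]; exact hcopDm
      obtain ⟨w, hw⟩ := IH P₂ (D.subgroupOf P₂) (Z.subgroupOf P₂)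
        ((Subgroup.zpowers (k'' ^ ep)).subgroupOf P₂) hcardP2n (hD.subgroupOf P₂) hcyc1 hcyc2
        hcop3 hc1 hc2
      have hpush := congrArg (Subgroup.map P₂.subtype) hw
      rw [map_subtype_conjS, Subgroup.subgroupOf_map_subtype, Subgroup.subgroupOf_map_subtype,
        inf_eq_left.mpr hZ''le, inf_eq_left.mpr hZleP2] at hpush
      -- assemble
      refine ⟨(w : N) * n₀, ?_⟩
      rw [← conjS_conjS, hK''Z]
      have hdecomp'' : Subgroup.zpowers k'' =
          Subgroup.zpowers (k'' ^ m) ⊔ Subgroup.zpowers (k'' ^ ep) := zpowers_eq_sup hcop_em.symm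
      rw [hdecomp'', conjS, Subgroup.map_sup,
        show Subgroup.map (MulAut.conj ((w : N))).toMonoidHom (Subgroup.zpowers (k'' ^ m))
          = conjS (w : N) (Subgroup.zpowers (k'' ^ m)) from rfl,
        show Subgroup.map (MulAut.conj ((w : N))).toMonoidHom (Subgroup.zpowers (k'' ^ ep))
          = conjS (w : N) (Subgroup.zpowers (k'' ^ ep)) from rfl, hpush]
      have hfix : conjS (w : N) (Subgroup.zpowers (k'' ^ m)) = Subgroup.zpowers (k'' ^ m) := by
        have hmem : k'' ^ m ∈ Subgroup.zpowers (k ^ m) := by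
          rw [← hk''p]; exact mem_zpowers _
        obtain ⟨j, hj⟩ := hmem
        rw [conjS_zpowers]
        congr 1
        have hcomm : Commute ((w : N)) (k'' ^ m) := by
          rw [← hj]
          exact ((hcent (w : N)).symm.zpow_right j)
        rw [hcomm.eq]; group
      rw [hfix, hk''p]
      have hfin : Subgroup.zpowers (k ^ m) ⊔ Z = K := by
        rw [hZdef, ← zpowers_eq_sup hcop_em.symm, hkZ]
      rw [hfin]

    · -- centralizer is proper: induct inside C
      have hcardC : Nat.card C ≤ n := by
        have := card_lt_of_ne_top (G := N) hC
        omega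
      have hDC := hD.subgroupOf C
      have hcycK : IsCyclic (K.subgroupOf C) :=
        isCyclic_of_surjective (subgroupOfEquivOfLe hKC).symm.toMonoidHom
          (subgroupOfEquivOfLe hKC).symm.surjective
      have hcycK'' : IsCyclic ((Subgroup.zpowers k'').subgroupOf C) :=
        isCyclic_of_surjective (subgroupOfEquivOfLe hK''C).symm.toMonoidHom
          (subgroupOfEquivOfLe hK''C).symm.surjective
      have hcardDD : Nat.card (D.subgroupOf C) ∣ Nat.card D := by
        rw [← Subgroup.inf_subgroupOf_right D C]
        rw [Nat.card_congr (subgroupOfEquivOfLe (inf_le_right : D ⊓ C ≤ C)).toEquiv]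
        exact Subgroup.card_dvd_of_le inf_le_left
      have hcardKK : Nat.card (K.subgroupOf C) = Nat.card K :=
        Nat.card_congr (subgroupOfEquivOfLe hKC).toEquiv
      have hcop2 : Nat.Coprime (Nat.card (D.subgroupOf C)) (Nat.card (K.subgroupOf C)) := by
        rw [hcardKK]
        exact Nat.Coprime.coprime_dvd_left hcardDD hcop
      obtain ⟨c, hc⟩ := IH C (D.subgroupOf C) (K.subgroupOf C)
        ((Subgroup.zpowers k'').subgroupOf C) hcardC hDC hcycK hcycK'' hcop2
        (isComplement'_subgroupOf h1 hKC) (isComplement'_subgroupOf hcomp'' hK''C)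
      refine ⟨(c : N) * n₀, ?_⟩
      have hpush := congrArg (Subgroup.map C.subtype) hc
      rw [map_subtype_conjS] at hpush
      rw [Subgroup.subgroupOf_map_subtype, Subgroup.subgroupOf_map_subtype] at hpush
      rw [inf_eq_left.mpr hK''C, inf_eq_left.mpr hKC] at hpush
      rw [← conjS_conjS, hK''Z]
      exact hpush

end ConjA

/-- Every element of order coprime to `|D|` lies in some cyclic complement of `D`. -/
lemma lemB (N : Type) [Group N] [Finite N] (D K₀ : Subgroup N) (hD : D.Normal)
    (h : D.IsComplement' K₀) (hK₀ : IsCyclic K₀)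
    (hcop : Nat.Coprime (Nat.card D) (Nat.card K₀)) (b : N)
    (hb : Nat.Coprime (orderOf b) (Nat.card D)) :
    ∃ K : Subgroup N, D.IsComplement' K ∧ IsCyclic K ∧ b ∈ K := by
  classical
  set B := Subgroup.zpowers b with hBdef
  set W := D ⊔ B with hWdef
  have hDW : D ≤ W := le_sup_left
  have hBW : B ≤ W := le_sup_right
  have hcardB : Nat.card B = orderOf b := Nat.card_zpowers b
  have hnormB : ∀ x ∈ B, ∀ a ∈ D, x * a * x⁻¹ ∈ D := fun x _ a ha => hD.conj_mem a ha x
  have hDB : D ⊓ B = ⊥ := inf_eq_bot_of_coprime (by rw [hcardB]; exact hb.symm)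
  have hcardW : Nat.card W = Nat.card D * orderOf b := by
    rw [hWdef, card_sup_of_norm_disjoint hnormB hDB, hcardB]
  -- K₀ ⊓ W is a complement of D in W
  have hKW : K₀ ⊓ W ≤ W := inf_le_right
  have hWsub : W = D ⊔ (K₀ ⊓ W) := by
    apply le_antisymm
    · intro w hw
      obtain ⟨⟨⟨d, hd⟩, ⟨k, hk⟩⟩, hdk⟩ := h.2 w
      simp only at hdk
      have hkW : k ∈ W := by
        have : k = d⁻¹ * w := by rw [← hdk]; group
        rw [this]
        exact mul_mem (inv_mem (hDW hd)) hw
      have : w = d * k := hdk.symm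
      rw [this]
      exact mul_mem (mem_sup_left hd) (mem_sup_right ⟨hk, hkW⟩)
    · exact sup_le hDW inf_le_right
  have hnormKW : ∀ x ∈ (K₀ ⊓ W), ∀ a ∈ D, x * a * x⁻¹ ∈ D := fun x _ a ha => hD.conj_mem a ha x
  have hDKW : D ⊓ (K₀ ⊓ W) = ⊥ := by
    have h8 : D ⊓ (K₀ ⊓ W) ≤ D ⊓ K₀ := inf_le_inf_left D inf_le_left
    have h9 : D ⊓ K₀ = ⊥ := h.disjoint.eq_bot
    exact le_bot_iff.mp (h9 ▸ h8)
  have hcardKW : Nat.card D * Nat.card (K₀ ⊓ W : Subgroup N) = Nat.card W := by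
    conv_rhs => rw [hWsub]
    rw [card_sup_of_norm_disjoint hnormKW hDKW]
  have hcardKW' : Nat.card (K₀ ⊓ W : Subgroup N) = orderOf b := by
    have h0 : 0 < Nat.card D := Nat.card_pos
    have := hcardKW.trans hcardW
    exact Nat.eq_of_mul_eq_mul_left h0 this
  -- complements inside W
  have hcardDW : Nat.card (D.subgroupOf W) = Nat.card D :=
    Nat.card_congr (subgroupOfEquivOfLe hDW).toEquiv
  have hcardBW : Nat.card (B.subgroupOf W) = orderOf b := by
    rw [Nat.card_congr (subgroupOfEquivOfLe hBW).toEquiv]; exact hcardB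
  have hcardKWW : Nat.card ((K₀ ⊓ W).subgroupOf W) = orderOf b := by
    rw [Nat.card_congr (subgroupOfEquivOfLe hKW).toEquiv]; exact hcardKW'
  have hc1 : (D.subgroupOf W).IsComplement' (B.subgroupOf W) :=
    isComplement'_of_coprime (by rw [hcardDW, hcardBW, hcardW]) (by rw [hcardDW, hcardBW]; exact hb.symm)
  have hc2 : (D.subgroupOf W).IsComplement' ((K₀ ⊓ W).subgroupOf W) :=
    isComplement'_of_coprime (by rw [hcardDW, hcardKWW, hcardW]) (by rw [hcardDW, hcardKWW]; exact hb.symm)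
  haveI hBcyc : IsCyclic B := isCyclic_of_zpowers_eq rfl
  have hcyc1 : IsCyclic (B.subgroupOf W) :=
    isCyclic_of_surjective (subgroupOfEquivOfLe hBW).symm.toMonoidHom
      (subgroupOfEquivOfLe hBW).symm.surjective
  haveI hKWcyc0 : IsCyclic ((K₀ ⊓ W).subgroupOf K₀ : Subgroup K₀) := Subgroup.isCyclic _
  have hKWcyc : IsCyclic (K₀ ⊓ W : Subgroup N) :=
    isCyclic_of_surjective (subgroupOfEquivOfLe (inf_le_left : K₀ ⊓ W ≤ K₀)).toMonoidHom
      (subgroupOfEquivOfLe _).surjective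
  have hcyc2 : IsCyclic ((K₀ ⊓ W).subgroupOf W) :=
    isCyclic_of_surjective (subgroupOfEquivOfLe hKW).symm.toMonoidHom
      (subgroupOfEquivOfLe hKW).symm.surjective
  have hcop2 : Nat.Coprime (Nat.card (D.subgroupOf W)) (Nat.card (B.subgroupOf W)) := by
    rw [hcardDW, hcardBW]; exact hb.symm
  obtain ⟨g, hg⟩ := conjA (Nat.card W) W (D.subgroupOf W) (B.subgroupOf W)
    ((K₀ ⊓ W).subgroupOf W) le_rfl (hD.subgroupOf W) hcyc1 hcyc2 hcop2 hc1 hc2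
  have hpush := congrArg (Subgroup.map W.subtype) hg
  rw [map_subtype_conjS, Subgroup.subgroupOf_map_subtype, Subgroup.subgroupOf_map_subtype,
    inf_eq_left.mpr hKW, inf_eq_left.mpr hBW] at hpush
  -- hpush : conjS ↑g (K₀ ⊓ W) = B
  refine ⟨conjS (g : N) K₀, isComplement'_conjS hD h (g : N), ?_, ?_⟩
  · exact isCyclic_of_surjective
      (equivMapOfInjective K₀ _ (MulAut.conj (g : N)).injective).toMonoidHom
      (equivMapOfInjective K₀ _ (MulAut.conj (g : N)).injective).surjective
  · have hbB : b ∈ B := mem_zpowers b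
    rw [← hpush] at hbB
    have hmono : conjS (g : N) (K₀ ⊓ W) ≤ conjS (g : N) K₀ :=
      Subgroup.map_mono inf_le_left
    exact hmono hbB

/-- Split `t` as `u * v` with `u` dividing a power of `n` and `v` coprime to `n`. -/
lemma nat_split : ∀ t : ℕ, 0 < t → ∀ n : ℕ, 0 < n →
    ∃ u v : ℕ, t = u * v ∧ u ∣ n ^ t ∧ Nat.Coprime v n ∧ Nat.Coprime u v := by
  intro t
  induction t using Nat.strong_induction_on with
  | _ t IH =>
    intro ht n hn
    by_cases hco : Nat.Coprime t n
    · exact ⟨1, t, (one_mul t).symm, one_dvd _, hco, Nat.coprime_one_left t⟩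
    · set d := Nat.gcd t n with hd
      have hd0 : 0 < d := Nat.gcd_pos_of_pos_left n ht
      have hne1 : d ≠ 1 := fun hh => hco hh
      have hd1 : 1 < d := by omega
      have hdt : d ∣ t := Nat.gcd_dvd_left t n
      have hdn : d ∣ n := Nat.gcd_dvd_right t n
      obtain ⟨t', ht'⟩ := hdt
      have ht'pos : 0 < t' := by
        rcases Nat.eq_zero_or_pos t' with h | h
        · subst h; simp at ht'; omega
        · exact h
      have ht'lt : t' < t := by
        have : t' < d * t' := by nlinarith
        omega
      obtain ⟨u', v', h1, h2, h3, h4⟩ := IH t' ht'lt ht'pos n hn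
      refine ⟨d * u', v', by rw [ht', h1, mul_assoc], ?_, h3, ?_⟩
      · have htt : t' + 1 ≤ t := by omega
        have h6 : d * u' ∣ n * n ^ t' := mul_dvd_mul hdn h2
        have h7 : n * n ^ t' = n ^ (t' + 1) := (pow_succ' n t').symm
        exact dvd_trans (h7 ▸ h6) (pow_dvd_pow n htt)
      · exact Nat.Coprime.mul ((h3.coprime_dvd_right hdn).symm) h4

/-- decompose an element into commuting parts with orders dividing coprime factors -/
lemma pow_decomp {G : Type*} [Group G] (x : G) (u v : ℕ) (hco : Nat.Coprime u v)
    (hx : x ^ (u * v) = 1) :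
    ∃ a b : G, x = a * b ∧ a * b = b * a ∧ a ∈ Subgroup.zpowers x ∧ b ∈ Subgroup.zpowers x ∧
      a ^ u = 1 ∧ b ^ v = 1 := by
  obtain ⟨r, s, hrs⟩ := hco.isCoprime
  refine ⟨x ^ ((s * v : ℤ)), x ^ ((r * u : ℤ)), ?_, ?_, zpow_mem (Subgroup.mem_zpowers x) _,
    zpow_mem (Subgroup.mem_zpowers x) _, ?_, ?_⟩
  · rw [← zpow_add]
    rw [show (s * v + r * u : ℤ) = r * u + s * v by ring, hrs, zpow_one]
  · rw [← zpow_add, ← zpow_add, add_comm]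
  · rw [← zpow_natCast, ← zpow_mul]
    rw [show ((s * v : ℤ) * u) = (((u * v : ℕ) : ℤ) * s) by push_cast; ring, zpow_mul,
      zpow_natCast, hx, one_zpow]
  · rw [← zpow_natCast, ← zpow_mul]
    rw [show ((r * u : ℤ) * v) = (((u * v : ℕ) : ℤ) * r) by push_cast; ring, zpow_mul,
      zpow_natCast, hx, one_zpow]

lemma isCyclic_of_injective' {A B : Type*} [Group A] [Group B] [IsCyclic B] (f : A →* B)
    (hf : Function.Injective f) : IsCyclic A := by
  have e := MonoidHom.ofInjective hf
  haveI : IsCyclic f.range := Subgroup.isCyclic _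
  exact isCyclic_of_surjective e.symm.toMonoidHom e.symm.surjective

/-- If a finite group `G` is a product `G = MH` of a normal subgroup `M` and a
cyclic subgroup `H` of coprime orders, then `G` is covered by boundedly many
(in terms of `|M|`) cyclic subgroups. -/
theorem cover_by_boundedly_many_cyclic_subgroups :
    ∃ f : ℕ → ℕ, ∀ (G : Type) [Group G] [Finite G] (M H : Subgroup G),
      M.Normal → IsCyclic H → Nat.Coprime (Nat.card M) (Nat.card H) →
      (∀ g : G, ∃ m ∈ M, ∃ h ∈ H, g = m * h) →
      ∃ S : Finset (Subgroup G), S.card ≤ f (Nat.card M) ∧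
        (∀ K ∈ S, IsCyclic K) ∧ ∀ x : G, ∃ K ∈ S, x ∈ K := by
  classical
  refine ⟨fun n => n * n, ?_⟩
  intro G _ _ M H hM hHc hco hcov
  haveI := hM
  haveI : Fintype G := Fintype.ofFinite G
  set nM := Nat.card M with hnM
  have hnMpos : 0 < nM := Nat.card_pos
  have hMH : M.IsComplement' H := by
    constructor
    · exact Subgroup.mul_injective_of_disjoint (disjoint_iff.mpr (inf_eq_bot_of_coprime hco))
    · intro g
      obtain ⟨m, hm, h, hh, hg⟩ := hcov g
      exact ⟨⟨⟨m, hm⟩, ⟨h, hh⟩⟩, hg.symm⟩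
  have hMindex : M.index = Nat.card H := hMH.symm.index_eq_card
  haveI hQGc : IsCyclic (G ⧸ M) := by
    apply isCyclic_of_surjective ((QuotientGroup.mk' M).comp H.subtype)
    intro q
    obtain ⟨g, rfl⟩ := QuotientGroup.mk'_surjective M q
    obtain ⟨m, hm, h, hh, hg⟩ := hcov g
    refine ⟨⟨h, hh⟩, ?_⟩
    simp only [MonoidHom.comp_apply, Subgroup.coe_subtype]
    rw [hg, QuotientGroup.mk'_eq_mk']
    have hz : h⁻¹ * m * h ∈ M := by simpa using hM.conj_mem m hm h⁻¹
    exact ⟨h⁻¹ * m * h, hz, by group⟩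
  -- base point for each centralizer
  have hbase : ∀ a : G, ∃ k₀ : G, k₀ ∈ Subgroup.centralizer {a} ∧
      ∀ y ∈ Subgroup.centralizer {a}, ∃ j : ℤ, k₀ ^ j * y⁻¹ ∈ M := by
    intro a
    set N := Subgroup.centralizer {a} with hNd
    haveI hDnorm : (M.subgroupOf N).Normal := hM.subgroupOf N
    set φ : ↥N →* G ⧸ M := (QuotientGroup.mk' M).comp N.subtype with hφ
    have hkerφ : ∀ z : ↥N, φ z = 1 ↔ z ∈ M.subgroupOf N := by
      intro z
      simp [hφ, QuotientGroup.eq_one_iff, Subgroup.mem_subgroupOf]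
    set ψ := QuotientGroup.lift (M.subgroupOf N) φ (fun z hz => (hkerφ z).mpr hz) with hψ
    have hψinj : Function.Injective ψ := by
      rw [← MonoidHom.ker_eq_bot_iff]
      rw [eq_bot_iff]
      intro z hz
      obtain ⟨y, rfl⟩ := QuotientGroup.mk'_surjective (M.subgroupOf N) z
      rw [MonoidHom.mem_ker] at hz
      have hzz : φ y = 1 := hz
      rw [Subgroup.mem_bot]
      exact (QuotientGroup.eq_one_iff y).mpr ((hkerφ y).mp hzz)
    haveI hQc : IsCyclic (↥N ⧸ M.subgroupOf N) := isCyclic_of_injective' ψ hψinj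
    obtain ⟨ζ, hζ⟩ := hQc.exists_generator
    obtain ⟨k₀', hk₀'⟩ := QuotientGroup.mk'_surjective (M.subgroupOf N) ζ
    refine ⟨(k₀' : G), k₀'.2, ?_⟩
    intro y hy
    obtain ⟨j, hj⟩ := hζ ((QuotientGroup.mk' (M.subgroupOf N)) ⟨y, hy⟩)
    have hj' : ζ ^ j = (QuotientGroup.mk' (M.subgroupOf N)) ⟨y, hy⟩ := hj
    refine ⟨j, ?_⟩
    have h9 : (QuotientGroup.mk' (M.subgroupOf N)) (k₀' ^ j * ⟨y, hy⟩⁻¹) = 1 := by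
      rw [map_mul, map_inv, map_zpow, hk₀', hj']
      group
    have h10 := (QuotientGroup.eq_one_iff _).mp h9
    rw [Subgroup.mem_subgroupOf] at h10
    simpa using h10
  choose k₀ hk₀mem hk₀gen using hbase
  -- the finite family
  set T : G → Finset G := fun a' => Finset.univ.filter (fun kk =>
    kk ∈ Subgroup.centralizer {a'} ∧ kk * (k₀ a')⁻¹ ∈ M ∧
    IsCyclic ↥(Subgroup.zpowers a' ⊔ Subgroup.zpowers kk)) with hT
  set S : Finset (Subgroup G) := ((M : Set G).toFinset).biUnion
    (fun a' => (T a').image (fun kk => Subgroup.zpowers a' ⊔ Subgroup.zpowers kk)) with hS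
  have hMcard : (M : Set G).toFinset.card = nM := by
    rw [Set.toFinset_card, ← Nat.card_eq_fintype_card]
    rfl
  refine ⟨S, ?_, ?_, ?_⟩
  · -- cardinality bound
    have hTcard : ∀ a', (T a').card ≤ nM := by
      intro a'
      rw [← hMcard]
      apply Finset.card_le_card_of_injOn (fun kk => kk * (k₀ a')⁻¹)
      · intro kk hkk
        rw [hT] at hkk
        simp only [Finset.mem_coe, Finset.mem_filter] at hkk
        rw [Finset.mem_coe, Set.mem_toFinset]
        exact hkk.2.2.1
      · intro x _ y _ hxy
        exact mul_right_cancel hxy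
    calc S.card ≤ ∑ a' ∈ (M : Set G).toFinset, ((T a').image
          (fun kk => Subgroup.zpowers a' ⊔ Subgroup.zpowers kk)).card := Finset.card_biUnion_le
      _ ≤ ∑ a' ∈ (M : Set G).toFinset, nM := by
          apply Finset.sum_le_sum
          intro a' _
          exact le_trans Finset.card_image_le (hTcard a')
      _ = nM * nM := by rw [Finset.sum_const, smul_eq_mul, hMcard]
  · -- cyclicity
    intro K hK
    rw [hS] at hK
    obtain ⟨a', _, hK2⟩ := Finset.mem_biUnion.mp hK
    obtain ⟨kk, hkk, rfl⟩ := Finset.mem_image.mp hK2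
    rw [hT] at hkk
    simp only [Finset.mem_filter] at hkk
    exact hkk.2.2.2
  · -- covering
    intro x
    have ht : 0 < orderOf x := orderOf_pos x
    obtain ⟨u, v, ht_uv, hu_dvd, hv_cop, huv_cop⟩ := nat_split (orderOf x) ht nM hnMpos
    obtain ⟨a, b, hxab, hab_comm, haz, hbz, hau, hbv⟩ := pow_decomp x u v huv_cop
      (by rw [← ht_uv]; exact pow_orderOf_eq_one x)
    have haM : a ∈ M := by
      have h1 : orderOf a ∣ u := orderOf_dvd_of_pow_eq_one hau
      have h2 : orderOf ((QuotientGroup.mk' M) a) ∣ u := dvd_trans (orderOf_map_dvd _ a) h1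
      have h3 : orderOf ((QuotientGroup.mk' M) a) ∣ Nat.card H := by
        have h3a := orderOf_dvd_natCard ((QuotientGroup.mk' M) a)
        rwa [show Nat.card (G ⧸ M) = M.index from rfl, hMindex] at h3a
      have h4 : orderOf ((QuotientGroup.mk' M) a) ∣ nM ^ orderOf x := dvd_trans h2 hu_dvd
      have h5 : Nat.Coprime (nM ^ orderOf x) (Nat.card H) := Nat.Coprime.pow_left _ hco
      rw [Nat.Coprime] at h5
      have h6 : orderOf ((QuotientGroup.mk' M) a) = 1 :=
        Nat.dvd_one.mp (h5 ▸ Nat.dvd_gcd h4 h3)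
      rw [orderOf_eq_one_iff] at h6
      exact (QuotientGroup.eq_one_iff a).mp h6
    set N := Subgroup.centralizer {a} with hNdef
    have haN : a ∈ N := by
      rw [hNdef, Subgroup.mem_centralizer_iff]
      rintro y (rfl : y = a); rfl
    have hbN : b ∈ N := by
      rw [hNdef, Subgroup.mem_centralizer_iff]
      rintro y (rfl : y = a); exact hab_comm
    set D := M.subgroupOf N with hDdef
    haveI hDnorm : D.Normal := hM.subgroupOf N
    have hcardD_dvd : Nat.card D ∣ nM := by
      rw [hDdef, ← Subgroup.inf_subgroupOf_right M N,
        Nat.card_congr (Subgroup.subgroupOfEquivOfLe (inf_le_right : M ⊓ N ≤ N)).toEquiv]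
      exact Subgroup.card_dvd_of_le inf_le_left
    have hDindex_dvd : D.index ∣ Nat.card H := by
      have hrel : D.index = M.relIndex N := rfl
      rw [hrel, ← hMindex]
      exact Subgroup.relIndex_dvd_index_of_normal M N
    have hcopD : Nat.Coprime (Nat.card D) D.index :=
      Nat.Coprime.coprime_dvd_left hcardD_dvd (Nat.Coprime.coprime_dvd_right hDindex_dvd hco)
    obtain ⟨K₀, hK₀⟩ := Subgroup.exists_right_complement'_of_coprime hcopD
    set φ : ↥N →* G ⧸ M := (QuotientGroup.mk' M).comp N.subtype with hφ
    have hkerφ : ∀ z : ↥N, φ z = 1 ↔ z ∈ D := by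
      intro z
      simp [hφ, QuotientGroup.eq_one_iff, hDdef, Subgroup.mem_subgroupOf]
    have hK₀inj : Function.Injective (φ.comp K₀.subtype) := by
      rw [← MonoidHom.ker_eq_bot_iff, eq_bot_iff]
      intro z hz
      rw [MonoidHom.mem_ker, MonoidHom.comp_apply] at hz
      have hzD : (z : ↥N) ∈ D := (hkerφ _).mp hz
      have : (z : ↥N) ∈ D ⊓ K₀ := ⟨hzD, z.2⟩
      rw [hK₀.disjoint.eq_bot, Subgroup.mem_bot] at this
      rw [Subgroup.mem_bot]
      exact Subtype.ext this
    have hK₀cyc : IsCyclic K₀ := isCyclic_of_injective' (φ.comp K₀.subtype) hK₀inj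
    have hcardK₀ : Nat.card K₀ = D.index := by
      have hcm := hK₀.card_mul
      have hcm2 := D.card_mul_index
      exact Nat.eq_of_mul_eq_mul_left Nat.card_pos (hcm.trans hcm2.symm)
    have hcopDK : Nat.Coprime (Nat.card D) (Nat.card K₀) := by rw [hcardK₀]; exact hcopD
    have hbordN : Nat.Coprime (orderOf (⟨b, hbN⟩ : ↥N)) (Nat.card D) := by
      have h1 : orderOf ((⟨b, hbN⟩ : ↥N) : G) = orderOf (⟨b, hbN⟩ : ↥N) := orderOf_submonoid _
      have h2 : orderOf b ∣ v := orderOf_dvd_of_pow_eq_one hbv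
      have h3 : Nat.Coprime v (Nat.card D) := hv_cop.coprime_dvd_right hcardD_dvd
      have h4 : Nat.Coprime (orderOf b) (Nat.card D) := Nat.Coprime.coprime_dvd_left h2 h3
      rw [← h1]
      exact h4
    obtain ⟨K, hKcomp, hKcyc, hbK⟩ := lemB ↥N D K₀ hDnorm hK₀ hK₀cyc hcopDK ⟨b, hbN⟩ hbordN
    -- distinguished generator of K
    set q : ↥N →* ↥N ⧸ D := QuotientGroup.mk' D with hq
    set ζ : ↥N ⧸ D := q ⟨k₀ a, hk₀mem a⟩ with hζdef
    have hζgen : ∀ z : ↥N ⧸ D, z ∈ Subgroup.zpowers ζ := by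
      intro z
      obtain ⟨y, rfl⟩ := QuotientGroup.mk'_surjective D z
      obtain ⟨j, hj⟩ := hk₀gen a (y : G) y.2
      refine ⟨j, ?_⟩
      have hmem : (⟨k₀ a, hk₀mem a⟩ : ↥N) ^ j * y⁻¹ ∈ D := by
        rw [hDdef, Subgroup.mem_subgroupOf]
        simpa using hj
      have h9 : q ((⟨k₀ a, hk₀mem a⟩ : ↥N) ^ j * y⁻¹) = 1 := (QuotientGroup.eq_one_iff _).mpr hmem
      rw [map_mul, map_inv, map_zpow] at h9
      have h10 : ζ ^ j * (q y)⁻¹ = 1 := h9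
      have : ζ ^ j = q y := by
        have := mul_inv_eq_one.mp h10
        exact this
      exact this
    have hcardK : Nat.card K = D.index := by
      have hcm := hKcomp.card_mul
      have hcm2 := D.card_mul_index
      exact Nat.eq_of_mul_eq_mul_left Nat.card_pos (hcm.trans hcm2.symm)
    have horderζ : orderOf ζ = D.index := by
      rw [← Nat.card_zpowers, (Subgroup.zpowers ζ).eq_top_iff'.mpr hζgen, Subgroup.card_top]
      rfl
    have hrinj : Function.Injective (q.comp K.subtype) := by
      rw [← MonoidHom.ker_eq_bot_iff, eq_bot_iff]
      intro z hz
      rw [MonoidHom.mem_ker, MonoidHom.comp_apply] at hz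
      have hzD : (z : ↥N) ∈ D := (QuotientGroup.eq_one_iff _).mp hz
      have : (z : ↥N) ∈ D ⊓ K := ⟨hzD, z.2⟩
      rw [hKcomp.disjoint.eq_bot, Subgroup.mem_bot] at this
      rw [Subgroup.mem_bot]
      exact Subtype.ext this
    have hrbij : Function.Bijective (q.comp K.subtype) :=
      (Nat.bijective_iff_injective_and_card _).mpr ⟨hrinj, by
        rw [hcardK]
        exact (show Nat.card (↥N ⧸ D) = D.index from rfl).symm⟩
    obtain ⟨khat, hkhat⟩ := hrbij.2 ζ
    set kN : ↥N := (khat : ↥N) with hkN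
    have hqkN : q kN = ζ := hkhat
    have hordkN_dvd : orderOf ζ ∣ orderOf kN := hqkN ▸ orderOf_map_dvd q kN
    have hKzp : Subgroup.zpowers kN = K := by
      apply subgroup_eq_of_le_of_card_le (Subgroup.zpowers_le.mpr khat.2)
      rw [Nat.card_zpowers, hcardK]
      exact Nat.le_of_dvd (orderOf_pos kN) (horderζ ▸ hordkN_dvd)
    set kk : G := (kN : G) with hkk
    have hkkN : kk ∈ N := kN.2
    have hkkM : kk * (k₀ a)⁻¹ ∈ M := by
      have h11 : q (kN * (⟨k₀ a, hk₀mem a⟩ : ↥N)⁻¹) = 1 := by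
        rw [map_mul, map_inv, hqkN, hζdef]
        group
      have h12 := (QuotientGroup.eq_one_iff _).mp h11
      rw [hDdef, Subgroup.mem_subgroupOf] at h12
      simpa using h12
    have hkkord : orderOf kk ∣ Nat.card H := by
      have h1 : orderOf kk = orderOf kN := orderOf_submonoid kN
      rw [h1]
      calc orderOf kN ∣ Nat.card K := Subgroup.orderOf_dvd_natCard K khat.2
        _ = D.index := hcardK
        _ ∣ Nat.card H := hDindex_dvd
    have haord : orderOf a ∣ nM ^ orderOf x := dvd_trans (orderOf_dvd_of_pow_eq_one hau) hu_dvd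
    have hcop_ak : Nat.Coprime (orderOf a) (orderOf kk) := by
      have h5 : Nat.Coprime (nM ^ orderOf x) (Nat.card H) := Nat.Coprime.pow_left _ hco
      exact Nat.Coprime.coprime_dvd_left haord (Nat.Coprime.coprime_dvd_right hkkord h5)
    have hcommak : Commute a kk := by
      have := Subgroup.mem_centralizer_iff.mp hkkN a rfl
      exact this
    have hdisjak : Subgroup.zpowers a ⊓ Subgroup.zpowers kk = ⊥ :=
      inf_eq_bot_of_coprime (by rw [Nat.card_zpowers, Nat.card_zpowers]; exact hcop_ak)
    have hnormak : ∀ y ∈ Subgroup.zpowers kk, ∀ z ∈ Subgroup.zpowers a,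
        y * z * y⁻¹ ∈ Subgroup.zpowers a := by
      rintro y ⟨i, rfl⟩ z ⟨j, rfl⟩
      have hcij : Commute (kk ^ (i : ℤ)) (a ^ (j : ℤ)) := (hcommak.symm).zpow_zpow i j
      have heq : kk ^ (i : ℤ) * a ^ (j : ℤ) * (kk ^ (i : ℤ))⁻¹ = a ^ (j : ℤ) := by
        rw [hcij.eq]; group
      rw [heq]
      exact zpow_mem (Subgroup.mem_zpowers a) j
    have hsupcard : Nat.card ↥(Subgroup.zpowers a ⊔ Subgroup.zpowers kk)
        = orderOf a * orderOf kk := by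
      rw [card_sup_of_norm_disjoint hnormak hdisjak, Nat.card_zpowers, Nat.card_zpowers]
    have hgen : Subgroup.zpowers (a * kk) = Subgroup.zpowers a ⊔ Subgroup.zpowers kk := by
      apply subgroup_eq_of_le_of_card_le
      · rw [Subgroup.zpowers_le]
        exact mul_mem (Subgroup.mem_sup_left (Subgroup.mem_zpowers a))
          (Subgroup.mem_sup_right (Subgroup.mem_zpowers kk))
      · rw [hsupcard, Nat.card_zpowers, hcommak.orderOf_mul_eq_mul_orderOf_of_coprime hcop_ak]
    have hcycQ : IsCyclic ↥(Subgroup.zpowers a ⊔ Subgroup.zpowers kk) :=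
      isCyclic_of_zpowers_eq hgen
    have hbmem : b ∈ Subgroup.zpowers kk := by
      have h13 : (⟨b, hbN⟩ : ↥N) ∈ Subgroup.zpowers kN := by rw [hKzp]; exact hbK
      obtain ⟨i, hi⟩ := h13
      exact ⟨i, by simpa using congrArg N.subtype hi⟩
    have hxmem : x ∈ Subgroup.zpowers a ⊔ Subgroup.zpowers kk := by
      rw [hxab]
      exact mul_mem (Subgroup.mem_sup_left (Subgroup.mem_zpowers a))
        (Subgroup.mem_sup_right hbmem)
    refine ⟨Subgroup.zpowers a ⊔ Subgroup.zpowers kk, ?_, hxmem⟩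
    rw [hS]
    apply Finset.mem_biUnion.mpr
    refine ⟨a, Set.mem_toFinset.mpr haM, ?_⟩
    apply Finset.mem_image.mpr
    refine ⟨kk, ?_, rfl⟩
    rw [hT]
    simp only [Finset.mem_filter]
    exact ⟨Finset.mem_univ kk, hkkN, hkkM, hcycQ⟩
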